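/- Let $R$ be a commutative ring and $I$ a prime ideal of $R$. Then $I$ is real (i.e., $\sum_{i=1}^n u_i^2 \in I$ implies all $u_i \in I$) if and only if the fraction field of $R/I$ is formally real (i.e., $-1$ is not a sum of squares in the fraction field of $R/I$). -/

import Mathlib

/-- Auxiliary: in a fraction field, any sum of squares can be written with a common
square denominator coming from the base ring. -/
lemma aux_common_denom {K : Type*} [CommRing K] [IsDomain K]
    {x : FractionRing K} (hx : IsSumSq x) :
    ∃ (b : K) (n : ℕ) (g : Fin n → K), b ≠ 0 ∧
      (algebraMap K (FractionRing K) b) ^ 2 * x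
        = algebraMap K (FractionRing K) (∑ i, g i ^ 2) := by
  induction hx with
  | zero => exact ⟨1, 0, ![], one_ne_zero, by simp⟩
  | @sq_add a S pS ih =>
    obtain ⟨b, n, g, hb, hg⟩ := ih
    obtain ⟨c, d, hd, hcd⟩ := IsFractionRing.div_surjective (A := K) a
    have hd0 : d ≠ 0 := nonZeroDivisors.ne_zero hd
    have hdF : algebraMap K (FractionRing K) d ≠ 0 :=
      IsFractionRing.to_map_ne_zero_of_mem_nonZeroDivisors (K := FractionRing K) hd
    have hca : algebraMap K (FractionRing K) c
        = algebraMap K (FractionRing K) d * a := by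
      field_simp at hcd
      rw [hcd]
    refine ⟨d * b, n + 1, Fin.cons (c * b) (fun i => d * g i), mul_ne_zero hd0 hb, ?_⟩
    simp only [Fin.sum_univ_succ, Fin.cons_zero, Fin.cons_succ]
    have key : (∑ i, (d * g i) ^ 2) = d ^ 2 * ∑ i, g i ^ 2 := by
      rw [Finset.mul_sum]; congr 1; ext i; ring
    rw [key, map_add, map_mul, map_mul, map_pow, map_pow, map_mul, ← hg, hca]
    ring

theorem stmt_5 (R : Type*) [CommRing R] (I : Ideal R) (hI : I.IsPrime) :
    (∀ (n : ℕ) (u : Fin n → R), (∑ i, u i ^ 2) ∈ I → ∀ i, u i ∈ I) ↔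
      ¬ IsSumSq (-1 : FractionRing (R ⧸ I)) := by
  haveI := hI
  set K := R ⧸ I
  set F := FractionRing K
  have hinj : Function.Injective (algebraMap K F) := IsFractionRing.injective K F
  constructor
  · intro hreal hsum
    obtain ⟨b, n, g, hb, hg⟩ := aux_common_denom hsum
    have hK : (∑ i, g i ^ 2) + b ^ 2 = 0 := by
      apply hinj
      rw [map_add, map_zero, ← hg, map_pow]
      ring
    -- lift to R
    have lift : ∀ y : K, ∃ x : R, Ideal.Quotient.mk I x = y := Ideal.Quotient.mk_surjective
    choose L hL using lift
    set u : Fin (n + 1) → R := fun i => L ((Fin.snoc g b : Fin (n+1) → K) i) with hu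
    have hmem : (∑ i, u i ^ 2) ∈ I := by
      rw [← Ideal.Quotient.eq_zero_iff_mem, map_sum]
      have : ∀ i, Ideal.Quotient.mk I (u i ^ 2) = ((Fin.snoc g b : Fin (n+1) → K) i) ^ 2 := by
        intro i; rw [map_pow, hL]
      simp only [this]
      rw [Fin.sum_univ_castSucc]
      simpa using hK
    have := hreal (n + 1) u hmem (Fin.last n)
    have h2 : Ideal.Quotient.mk I (u (Fin.last n)) = b := by
      rw [hu]; simp only [hL, Fin.snoc_last]
    apply hb
    rw [← h2, Ideal.Quotient.eq_zero_iff_mem]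
    exact this
  · intro h n u hsum i
    by_contra hui
    set v : Fin n → F := fun j => algebraMap K F (Ideal.Quotient.mk I (u j)) with hv
    have hvi : v i ≠ 0 := by
      simp only [hv]
      intro hz
      apply hui
      rw [← Ideal.Quotient.eq_zero_iff_mem]
      apply hinj
      rw [hz, map_zero]
    have hvsum : ∑ j, v j ^ 2 = 0 := by
      simp only [hv, ← map_pow, ← map_sum]
      rw [Ideal.Quotient.eq_zero_iff_mem.mpr hsum, map_zero]
    apply h
    have key : (-1 : F) = ∑ j ∈ Finset.univ.erase i, (v j / v i) * (v j / v i) := by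
      have h1 : ∑ j ∈ Finset.univ.erase i, v j ^ 2 = -(v i ^ 2) := by
        rw [Finset.sum_erase_eq_sub (Finset.mem_univ i), hvsum, zero_sub]
      have h2 : ∀ j, (v j / v i) * (v j / v i) = v j ^ 2 / v i ^ 2 := by
        intro j; ring
      simp only [h2]
      rw [← Finset.sum_div, h1, neg_div, div_self (pow_ne_zero 2 hvi)]
    rw [key]
    exact IsSumSq.sum_mul_self _ _
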